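/- arXiv:2401.15835 — 2 statements merged into one kernel-verified Lean document; each statement's English description precedes it below -/
import Mathlib

section
/- Let T > 0 and let A, B, R, Q, H, Γ be real constants with R > 0, Q ≥ 0, H ≥ 0. For each positive integer N with 1 − Γ/N ≥ 0 and (1 − Γ/N)(1 − Γ) ≥ 0, let P_N and Π_N be the unique C¹ solutions of the scalar Riccati terminal value problems with data (A,B,R,(1−Γ/N)Q,H) and (A,B,R,(1−Γ/N)(1−Γ)Q,H) respectively, and set K_N := Π_N − P_N. Let P̄ and Π̄ be the unique C¹ solutions with data (A,B,R,Q,H) and (A,B,R,(1−Γ)Q,H) respectively (assuming also (1−Γ)Q ≥ 0), and set K̄ := Π̄ − P̄. Then there exists a constant C ≥ 0, independent of N, such that for every such N: sup_{t∈[0,T]} |P_N(t) − P̄(t)| + sup_{t∈[0,T]} |Π_N(t) − Π̄(t)| + sup_{t∈[0,T]} |K_N(t) − K̄(t)| ≤ C/N. -/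
/-- `P` is a C¹ solution on `[0,T]` of the scalar Riccati terminal value problem
with data `(A, B, R, q, H)`:
`P'(t) + 2A·P(t) − (B²/R)·P(t)² + q = 0` on `[0,T]`, `P(T) = H`. -/
def IsRiccatiSol (A B R q H T : ℝ) (P : ℝ → ℝ) : Prop :=
  ContDiffOn ℝ 1 P (Set.Icc 0 T) ∧
  (∀ t ∈ Set.Icc 0 T,
    derivWithin P (Set.Icc 0 T) t + 2 * A * P t - B ^ 2 / R * P t ^ 2 + q = 0) ∧
  P T = H

open Set Real Filter Topology

/-- The time-reversed function `u s = P (T - s)` solves the forward ODE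
`u' = 2A u - b u² + q` with `u 0 = H`, where `b = B²/R`. -/
lemma riccati_flip {A B R q H T : ℝ} {P : ℝ → ℝ}
    (hP : IsRiccatiSol A B R q H T P) :
    P (T - 0) = H ∧ ContinuousOn (fun s => P (T - s)) (Icc 0 T) ∧
      ∀ s ∈ Icc 0 T, HasDerivWithinAt (fun s => P (T - s))
        (2 * A * P (T - s) - B ^ 2 / R * (P (T - s)) ^ 2 + q) (Icc 0 T) s := by
  obtain ⟨hreg, heq, hterm⟩ := hP
  have hmaps : MapsTo (fun s : ℝ => T - s) (Icc 0 T) (Icc 0 T) := by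
    intro s hs
    simp only [mem_Icc] at *
    constructor <;> linarith [hs.1, hs.2]
  refine ⟨by simpa using hterm, hreg.continuousOn.comp (by fun_prop) hmaps, ?_⟩
  intro s hs
  have hts : T - s ∈ Icc 0 T := hmaps hs
  have hdP : HasDerivWithinAt P (derivWithin P (Icc 0 T) (T - s)) (Icc 0 T) (T - s) :=
    ((hreg.differentiableOn one_ne_zero) (T - s) hts).hasDerivWithinAt
  have hlin : HasDerivWithinAt (fun s : ℝ => T - s) (-1) (Icc 0 T) s :=
    ((hasDerivAt_id s).const_sub T).hasDerivWithinAt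
  have hcomp := hdP.comp (x := s) hlin hmaps
  have hval : derivWithin P (Icc 0 T) (T - s) * (-1)
      = 2 * A * P (T - s) - B ^ 2 / R * (P (T - s)) ^ 2 + q := by
    have := heq (T - s) hts
    linarith
  rw [hval] at hcomp
  exact hcomp

/-- Pass from derivative within `Icc 0 T` to derivative within `Ici s`. -/
lemma hasDeriv_Ici_of_Icc {u : ℝ → ℝ} {d T s : ℝ} (hsT : s < T)
    (h : HasDerivWithinAt u d (Icc 0 T) s) (hs : 0 ≤ s) :
    HasDerivWithinAt u d (Ici s) s :=
  (h.mono (Icc_subset_Icc_left hs)).mono_of_mem_nhdsWithin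
    (Icc_mem_nhdsGE_of_mem ⟨le_refl s, hsT⟩)

/-- Nonnegativity of solutions of `u' = 2Au - bu² + q`, `u 0 = H ≥ 0`, `q ≥ 0`, `b ≥ 0`. -/
lemma riccati_nonneg {A b q H T : ℝ} {u : ℝ → ℝ} (hb : 0 ≤ b) (hq : 0 ≤ q) (hH : 0 ≤ H)
    (hu0 : u 0 = H) (hc : ContinuousOn u (Icc 0 T))
    (hd : ∀ s ∈ Icc 0 T, HasDerivWithinAt u (2 * A * u s - b * (u s) ^ 2 + q) (Icc 0 T) s) :
    ∀ s ∈ Icc 0 T, 0 ≤ u s := by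
  by_contra hcon
  push_neg at hcon
  obtain ⟨s₁, hs₁, hneg⟩ := hcon
  obtain ⟨M₀, hM₀⟩ := (isCompact_Icc (a := (0:ℝ)) (b := T)).exists_bound_of_continuousOn hc
  simp only [norm_eq_abs] at hM₀
  set S : Set ℝ := Icc 0 s₁ ∩ u ⁻¹' Ici 0 with hS
  have hSne : S.Nonempty := ⟨0, ⟨le_refl 0, hs₁.1⟩, by simp [hu0, hH]⟩
  have hSbdd : BddAbove S := ⟨s₁, fun x hx => hx.1.2⟩
  have hSclosed : IsClosed S :=
    (hc.mono (Icc_subset_Icc le_rfl hs₁.2)).preimage_isClosed_of_isClosed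
      isClosed_Icc isClosed_Ici
  set s₀ := sSup S with hs₀def
  have hs₀S : s₀ ∈ S := hSclosed.csSup_mem hSne hSbdd
  have hs₀Icc : s₀ ∈ Icc 0 s₁ := hs₀S.1
  have hs₀nn : (0:ℝ) ≤ u s₀ := hs₀S.2
  have hs₀lt : s₀ < s₁ := by
    rcases lt_or_eq_of_le hs₀Icc.2 with h | h
    · exact h
    · exfalso; rw [h] at hs₀nn; linarith
  have hsub : Icc s₀ s₁ ⊆ Icc 0 T := Icc_subset_Icc hs₀Icc.1 hs₁.2
  have hmid : ∀ x ∈ Ioc s₀ s₁, u x < 0 := by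
    intro x hx
    by_contra hge
    push_neg at hge
    have : x ∈ S := ⟨⟨le_trans hs₀Icc.1 hx.1.le, hx.2⟩, hge⟩
    exact absurd (le_csSup hSbdd this) (not_le.2 hx.1)
  have hus₀le : u s₀ ≤ 0 := by
    have hclos : s₀ ∈ closure (Ioc s₀ s₁) := by
      rw [closure_Ioc hs₀lt.ne]; exact ⟨le_refl _, hs₀lt.le⟩
    haveI : (𝓝[Ioc s₀ s₁] s₀).NeBot := mem_closure_iff_nhdsWithin_neBot.mp hclos
    have htend : Tendsto u (𝓝[Ioc s₀ s₁] s₀) (𝓝 (u s₀)) :=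
      (hc.continuousWithinAt (hsub ⟨le_refl _, hs₀lt.le⟩)).mono
        (fun x hx => hsub ⟨hx.1.le, hx.2⟩)
    exact le_of_tendsto htend
      (eventually_of_mem self_mem_nhdsWithin fun x hx => (hmid x hx).le)
  have hus₀ : u s₀ = 0 := le_antisymm hus₀le hs₀nn
  have hule : ∀ x ∈ Ico s₀ s₁, u x ≤ 0 := by
    intro x hx
    rcases eq_or_lt_of_le hx.1 with h | h
    · rw [← h, hus₀]
    · exact (hmid x ⟨h, hx.2.le⟩).le
  have key := le_gronwallBound_of_liminf_deriv_right_le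
    (f := fun s => -u s) (f' := fun s => -(2 * A * u s - b * (u s) ^ 2 + q))
    (δ := 0) (K := 2 * |A| + b * M₀) (ε := 0) (a := s₀) (b := s₁)
    ((hc.mono hsub).neg)
    (fun x hx r hr => by
      have hxIcc : x ∈ Icc 0 T := hsub ⟨hx.1, hx.2.le⟩
      have hIci : HasDerivWithinAt u (2 * A * u x - b * (u x) ^ 2 + q) (Ici x) x :=
        hasDeriv_Ici_of_Icc (lt_of_lt_of_le hx.2 hs₁.2) (hd x hxIcc) hxIcc.1
      exact hIci.neg.liminf_right_slope_le hr)
    (by simp [hus₀])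
    (fun x hx => by
      have hxIcc : x ∈ Icc 0 T := hsub ⟨hx.1, hx.2.le⟩
      have h1 : u x ≤ 0 := hule x hx
      have h2 : |u x| ≤ M₀ := hM₀ x hxIcc
      have h3 : -u x ≤ M₀ := by rw [abs_of_nonpos h1] at h2; linarith
      have h4 : A ≤ |A| := le_abs_self A
      have h5 : -|A| ≤ A := neg_abs_le A
      show -(2 * A * u x - b * u x ^ 2 + q) ≤ (2 * |A| + b * M₀) * -u x + 0
      nlinarith [mul_nonneg (mul_nonneg hb (neg_nonneg.2 h1)) (show (0:ℝ) ≤ M₀ + u x by linarith),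
        mul_nonneg (show (0:ℝ) ≤ |A| - A by linarith) (neg_nonneg.2 h1)])
  have hfin := key s₁ ⟨hs₀lt.le, le_refl _⟩
  rw [gronwallBound_ε0_δ0] at hfin
  have hfin' : -u s₁ ≤ 0 := hfin
  linarith

/-- Monotonicity of the Grönwall bound in its time variable. -/
lemma gronwallBound_mono_time {δ K ε x y : ℝ} (hδ : 0 ≤ δ) (hK : 0 < K) (hε : 0 ≤ ε)
    (hxy : x ≤ y) : gronwallBound δ K ε x ≤ gronwallBound δ K ε y := by
  rw [gronwallBound_of_K_ne_0 hK.ne']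
  have h1 : Real.exp (K * x) ≤ Real.exp (K * y) :=
    Real.exp_le_exp.2 (mul_le_mul_of_nonneg_left hxy hK.le)
  have h3 : 0 ≤ ε / K := div_nonneg hε hK.le
  nlinarith

/-- A uniform upper bound for nonnegative solutions. -/
lemma riccati_upper {A b q qmax H T : ℝ} {u : ℝ → ℝ} (hb : 0 ≤ b) (hqm : q ≤ qmax)
    (hu0 : u 0 = H) (hc : ContinuousOn u (Icc 0 T))
    (hd : ∀ s ∈ Icc 0 T, HasDerivWithinAt u (2 * A * u s - b * (u s) ^ 2 + q) (Icc 0 T) s)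
    (hnn : ∀ s ∈ Icc 0 T, 0 ≤ u s) (hqmax : 0 ≤ qmax) (hH : 0 ≤ H) :
    ∀ s ∈ Icc 0 T, u s ≤ gronwallBound H (2 * |A| + 1) qmax T := by
  intro s hs
  have key := le_gronwallBound_of_liminf_deriv_right_le
    (f := u) (f' := fun s => 2 * A * u s - b * (u s) ^ 2 + q)
    (δ := H) (K := 2 * |A| + 1) (ε := qmax) (a := 0) (b := T) hc
    (fun x hx r hr => by
      have hxIcc : x ∈ Icc 0 T := ⟨hx.1, hx.2.le⟩
      exact (hasDeriv_Ici_of_Icc hx.2 (hd x hxIcc) hx.1).liminf_right_slope_le hr)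
    (le_of_eq hu0)
    (fun x hx => by
      have hxIcc : x ∈ Icc 0 T := ⟨hx.1, hx.2.le⟩
      have h1 : 0 ≤ u x := hnn x hxIcc
      have h4 : A ≤ |A| := le_abs_self A
      show 2 * A * u x - b * u x ^ 2 + q ≤ (2 * |A| + 1) * u x + qmax
      nlinarith [mul_nonneg hb (sq_nonneg (u x)),
        mul_nonneg (show (0:ℝ) ≤ |A| - A by linarith) h1])
  have hKpos : (0:ℝ) < 2 * |A| + 1 := by positivity
  calc u s ≤ gronwallBound H (2 * |A| + 1) qmax (s - 0) := key s hs
    _ ≤ gronwallBound H (2 * |A| + 1) qmax T :=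
        gronwallBound_mono_time hH hKpos hqmax (by linarith [hs.2])

/-- Stability of the flipped Riccati flow with respect to the constant `q`. -/
lemma riccati_stab {A b q₁ q₂ M T : ℝ} {u₁ u₂ : ℝ → ℝ} (hb : 0 ≤ b)
    (h10 : u₁ 0 = u₂ 0)
    (hc₁ : ContinuousOn u₁ (Icc 0 T)) (hc₂ : ContinuousOn u₂ (Icc 0 T))
    (hd₁ : ∀ s ∈ Icc 0 T, HasDerivWithinAt u₁ (2 * A * u₁ s - b * (u₁ s) ^ 2 + q₁) (Icc 0 T) s)
    (hd₂ : ∀ s ∈ Icc 0 T, HasDerivWithinAt u₂ (2 * A * u₂ s - b * (u₂ s) ^ 2 + q₂) (Icc 0 T) s)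
    (hbd₁ : ∀ s ∈ Icc 0 T, |u₁ s| ≤ M) (hbd₂ : ∀ s ∈ Icc 0 T, |u₂ s| ≤ M) (hT : 0 ≤ T) :
    ∀ s ∈ Icc 0 T, |u₁ s - u₂ s|
      ≤ |q₁ - q₂| * Real.exp ((2 * |A| + 2 * b * M + 1) * T) := by
  have hM0 : 0 ≤ M := le_trans (abs_nonneg _) (hbd₁ 0 ⟨le_refl _, hT⟩)
  have hK1 : (1:ℝ) ≤ 2 * |A| + 2 * b * M + 1 := by
    nlinarith [abs_nonneg A, mul_nonneg hb hM0]
  have key := norm_le_gronwallBound_of_norm_deriv_right_le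
    (f := fun s => u₁ s - u₂ s)
    (f' := fun s => (2 * A * u₁ s - b * (u₁ s) ^ 2 + q₁) - (2 * A * u₂ s - b * (u₂ s) ^ 2 + q₂))
    (δ := 0) (K := 2 * |A| + 2 * b * M + 1) (ε := |q₁ - q₂|) (a := 0) (b := T)
    (hc₁.sub hc₂)
    (fun x hx =>
      (hasDeriv_Ici_of_Icc hx.2 (hd₁ x ⟨hx.1, hx.2.le⟩) hx.1).sub
        (hasDeriv_Ici_of_Icc hx.2 (hd₂ x ⟨hx.1, hx.2.le⟩) hx.1))
    (by simp [h10])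
    (fun x hx => by
      have hxIcc : x ∈ Icc 0 T := ⟨hx.1, hx.2.le⟩
      have h1 : |u₁ x| ≤ M := hbd₁ x hxIcc
      have h2 : |u₂ x| ≤ M := hbd₂ x hxIcc
      show |(2 * A * u₁ x - b * u₁ x ^ 2 + q₁) - (2 * A * u₂ x - b * u₂ x ^ 2 + q₂)|
          ≤ (2 * |A| + 2 * b * M + 1) * |u₁ x - u₂ x| + |q₁ - q₂|
      have heq : (2 * A * u₁ x - b * (u₁ x) ^ 2 + q₁) - (2 * A * u₂ x - b * (u₂ x) ^ 2 + q₂)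
          = (2 * A - b * (u₁ x + u₂ x)) * (u₁ x - u₂ x) + (q₁ - q₂) := by ring
      rw [heq]
      have hco : |2 * A - b * (u₁ x + u₂ x)| ≤ 2 * |A| + 2 * b * M + 1 := by
        have hb1 : |2 * A| = 2 * |A| := by rw [abs_mul]; simp
        have hb2 : |b * (u₁ x + u₂ x)| ≤ b * (2 * M) := by
          rw [abs_mul, abs_of_nonneg hb]
          have h3 := abs_add_le (u₁ x) (u₂ x)
          nlinarith
        calc |2 * A - b * (u₁ x + u₂ x)|
            ≤ |2 * A| + |b * (u₁ x + u₂ x)| := abs_sub _ _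
          _ ≤ 2 * |A| + 2 * b * M + 1 := by rw [hb1]; linarith
      calc |(2 * A - b * (u₁ x + u₂ x)) * (u₁ x - u₂ x) + (q₁ - q₂)|
          ≤ |(2 * A - b * (u₁ x + u₂ x)) * (u₁ x - u₂ x)| + |q₁ - q₂| := abs_add_le _ _
        _ = |2 * A - b * (u₁ x + u₂ x)| * |u₁ x - u₂ x| + |q₁ - q₂| := by rw [abs_mul]
        _ ≤ (2 * |A| + 2 * b * M + 1) * |u₁ x - u₂ x| + |q₁ - q₂| := by
            nlinarith [abs_nonneg (u₁ x - u₂ x)])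
  intro s hs
  have h := key s hs
  simp only [norm_eq_abs] at h
  set K := 2 * |A| + 2 * b * M + 1 with hKdef
  have hKpos : (0:ℝ) < K := by linarith
  rw [gronwallBound_of_K_ne_0 hKpos.ne'] at h
  have he1 : Real.exp (K * (s - 0)) ≤ Real.exp (K * T) :=
    Real.exp_le_exp.2 (mul_le_mul_of_nonneg_left (by linarith [hs.2]) hKpos.le)
  have he2 : (1:ℝ) ≤ Real.exp (K * (s - 0)) := by
    rw [← Real.exp_zero]
    exact Real.exp_le_exp.2 (mul_nonneg hKpos.le (by linarith [hs.1]))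
  have hq : (0:ℝ) ≤ |q₁ - q₂| := abs_nonneg _
  have hdiv : |q₁ - q₂| / K ≤ |q₁ - q₂| := by
    rw [div_le_iff₀ hKpos]; nlinarith
  have h0 : 0 ≤ Real.exp (K * (s - 0)) - 1 := by linarith
  have hstep := mul_le_mul_of_nonneg_right hdiv h0
  nlinarith [Real.exp_pos (K * T), div_nonneg hq hKpos.le]

set_option maxHeartbeats 1000000 in
/-- Quantitative mean field limit of the Riccati equations: with
`P_N, Π_N, K_N = Π_N − P_N` the Riccati functions of the `N`-follower system and
`P̄, Π̄, K̄ = Π̄ − P̄` their mean field limits, there is a constant `C ≥ 0`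
independent of `N` such that
`sup |P_N − P̄| + sup |Π_N − Π̄| + sup |K_N − K̄| ≤ C/N`. -/
theorem riccati_meanfield_convergence (T A B R Q H Γ : ℝ)
    (hT : 0 < T) (hR : 0 < R) (hQ : 0 ≤ Q) (hH : 0 ≤ H) (hΓQ : 0 ≤ (1 - Γ) * Q)
    (Pbar Pibar : ℝ → ℝ)
    (hPbar : IsRiccatiSol A B R Q H T Pbar)
    (hPibar : IsRiccatiSol A B R ((1 - Γ) * Q) H T Pibar) :
    ∃ C : ℝ, 0 ≤ C ∧
      ∀ N : ℕ, 0 < N → 0 ≤ 1 - Γ / (N : ℝ) → 0 ≤ (1 - Γ / (N : ℝ)) * (1 - Γ) →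
        ∀ PN PiN : ℝ → ℝ,
          IsRiccatiSol A B R ((1 - Γ / (N : ℝ)) * Q) H T PN →
          IsRiccatiSol A B R ((1 - Γ / (N : ℝ)) * (1 - Γ) * Q) H T PiN →
          ∀ t ∈ Set.Icc 0 T,
            |PN t - Pbar t| + |PiN t - Pibar t|
              + |(PiN t - PN t) - (Pibar t - Pbar t)| ≤ C / (N : ℝ) := by
  have hb : (0:ℝ) ≤ B ^ 2 / R := div_nonneg (sq_nonneg B) hR.le
  have hqmax : (0:ℝ) ≤ (1 + |Γ|) ^ 2 * Q := by positivity
  set M := gronwallBound H (2 * |A| + 1) ((1 + |Γ|) ^ 2 * Q) T with hMdef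
  set E := Real.exp ((2 * |A| + 2 * (B ^ 2 / R) * M + 1) * T) with hEdef
  set ε₀ := |Γ| * (1 + |Γ|) * Q with hε₀def
  have hE : (0:ℝ) < E := by rw [hEdef]; exact Real.exp_pos _
  have hε₀nn : (0:ℝ) ≤ ε₀ := by rw [hε₀def]; positivity
  refine ⟨4 * ε₀ * E, by nlinarith, ?_⟩
  intro N hN hΓN hΓN2 PN PiN hPN hPiN t ht
  have hNR : (0:ℝ) < (N : ℝ) := Nat.cast_pos.2 hN
  have hN1 : (1:ℝ) ≤ (N : ℝ) := Nat.one_le_cast.2 hN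
  have habsΓ : (0:ℝ) ≤ |Γ| := abs_nonneg Γ
  -- bounds on the q's
  have hq1m : Q ≤ (1 + |Γ|) ^ 2 * Q := by nlinarith
  have h1Γ : (1:ℝ) - Γ ≤ 1 + |Γ| := by linarith [neg_abs_le Γ]
  have hq2m : (1 - Γ) * Q ≤ (1 + |Γ|) ^ 2 * Q := by nlinarith
  have hq3 : (0:ℝ) ≤ (1 - Γ / (N:ℝ)) * Q := mul_nonneg hΓN hQ
  have h1N : 1 - Γ / (N:ℝ) ≤ 1 + |Γ| := by
    have h : -Γ ≤ |Γ| * (N:ℝ) := by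
      nlinarith [neg_abs_le Γ, mul_nonneg habsΓ (show (0:ℝ) ≤ (N:ℝ) - 1 by linarith)]
    have h2 : -(Γ / (N:ℝ)) ≤ |Γ| := by
      rw [← neg_div, div_le_iff₀ hNR]; exact h
    linarith
  have hq3m : (1 - Γ / (N:ℝ)) * Q ≤ (1 + |Γ|) ^ 2 * Q :=
    le_trans (mul_le_mul_of_nonneg_right h1N hQ)
      (mul_le_mul_of_nonneg_right (by nlinarith : (1:ℝ) + |Γ| ≤ (1 + |Γ|) ^ 2) hQ)
  have hq4 : (0:ℝ) ≤ (1 - Γ / (N:ℝ)) * (1 - Γ) * Q := mul_nonneg hΓN2 hQ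
  have hq4m : (1 - Γ / (N:ℝ)) * (1 - Γ) * Q ≤ (1 + |Γ|) ^ 2 * Q := by
    have hXY : (1 - Γ / (N:ℝ)) * (1 - Γ) ≤ (1 + |Γ|) ^ 2 := by
      have f1 : (0:ℝ) ≤ (1 - Γ / (N:ℝ)) * ((1 + |Γ|) - (1 - Γ)) :=
        mul_nonneg hΓN (by linarith)
      have f2 : (1 - Γ / (N:ℝ)) * (1 + |Γ|) ≤ (1 + |Γ|) * (1 + |Γ|) :=
        mul_le_mul_of_nonneg_right h1N (by positivity)
      nlinarith
    exact mul_le_mul_of_nonneg_right hXY hQ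
  -- flips
  obtain ⟨hu₁0, hu₁c, hu₁d⟩ := riccati_flip hPbar
  obtain ⟨hu₂0, hu₂c, hu₂d⟩ := riccati_flip hPibar
  obtain ⟨hu₃0, hu₃c, hu₃d⟩ := riccati_flip hPN
  obtain ⟨hu₄0, hu₄c, hu₄d⟩ := riccati_flip hPiN
  -- uniform bounds on the flipped solutions
  have hnn₁ := riccati_nonneg hb hQ hH hu₁0 hu₁c hu₁d
  have hnn₂ := riccati_nonneg hb hΓQ hH hu₂0 hu₂c hu₂d
  have hnn₃ := riccati_nonneg hb hq3 hH hu₃0 hu₃c hu₃d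
  have hnn₄ := riccati_nonneg hb hq4 hH hu₄0 hu₄c hu₄d
  have hub₁ := riccati_upper hb hq1m hu₁0 hu₁c hu₁d hnn₁ hqmax hH
  have hub₂ := riccati_upper hb hq2m hu₂0 hu₂c hu₂d hnn₂ hqmax hH
  have hub₃ := riccati_upper hb hq3m hu₃0 hu₃c hu₃d hnn₃ hqmax hH
  have hub₄ := riccati_upper hb hq4m hu₄0 hu₄c hu₄d hnn₄ hqmax hH
  have habs₁ : ∀ s ∈ Icc 0 T, |Pbar (T - s)| ≤ M := fun s hs => by
    rw [abs_of_nonneg (hnn₁ s hs), hMdef]; exact hub₁ s hs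
  have habs₂ : ∀ s ∈ Icc 0 T, |Pibar (T - s)| ≤ M := fun s hs => by
    rw [abs_of_nonneg (hnn₂ s hs), hMdef]; exact hub₂ s hs
  have habs₃ : ∀ s ∈ Icc 0 T, |PN (T - s)| ≤ M := fun s hs => by
    rw [abs_of_nonneg (hnn₃ s hs), hMdef]; exact hub₃ s hs
  have habs₄ : ∀ s ∈ Icc 0 T, |PiN (T - s)| ≤ M := fun s hs => by
    rw [abs_of_nonneg (hnn₄ s hs), hMdef]; exact hub₄ s hs
  -- stability
  have h31 : (fun s => PN (T - s)) 0 = (fun s => Pbar (T - s)) 0 := by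
    simp only; rw [hu₃0, hu₁0]
  have h42 : (fun s => PiN (T - s)) 0 = (fun s => Pibar (T - s)) 0 := by
    simp only; rw [hu₄0, hu₂0]
  have hts : T - t ∈ Icc 0 T := by
    constructor
    · linarith [ht.2]
    · linarith [ht.1]
  have hstabP := riccati_stab hb h31 hu₃c hu₁c hu₃d hu₁d habs₃ habs₁ hT.le (T - t) hts
  have hstabPi := riccati_stab hb h42 hu₄c hu₂c hu₄d hu₂d habs₄ habs₂ hT.le (T - t) hts
  rw [← hEdef] at hstabP hstabPi
  have htt : T - (T - t) = t := by ring
  simp only [htt] at hstabP hstabPi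
  -- bound the q differences
  have hq31 : |(1 - Γ / (N:ℝ)) * Q - Q| ≤ ε₀ / (N:ℝ) := by
    have hrw : (1 - Γ / (N:ℝ)) * Q - Q = -(Γ * Q) / (N:ℝ) := by ring
    rw [hrw, abs_div, abs_neg, abs_mul, Nat.abs_cast, abs_of_nonneg hQ]
    rw [div_le_div_iff₀ hNR hNR]
    have hnum : |Γ| * Q ≤ ε₀ := by rw [hε₀def]; nlinarith
    nlinarith
  have hq42 : |(1 - Γ / (N:ℝ)) * (1 - Γ) * Q - (1 - Γ) * Q| ≤ ε₀ / (N:ℝ) := by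
    have hrw : (1 - Γ / (N:ℝ)) * (1 - Γ) * Q - (1 - Γ) * Q
        = -(Γ * ((1 - Γ) * Q)) / (N:ℝ) := by ring
    rw [hrw, abs_div, abs_neg, abs_mul, Nat.abs_cast, abs_of_nonneg hΓQ]
    rw [div_le_div_iff₀ hNR hNR]
    have h1Γ' : (1:ℝ) - Γ ≤ 1 + |Γ| := h1Γ
    have hnum : |Γ| * ((1 - Γ) * Q) ≤ ε₀ := by
      rw [hε₀def]
      nlinarith [mul_le_mul_of_nonneg_right h1Γ' hQ]
    nlinarith
  -- final bounds
  have hP : |PN t - Pbar t| ≤ ε₀ / (N:ℝ) * E :=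
    le_trans hstabP (mul_le_mul_of_nonneg_right hq31 hE.le)
  have hPi : |PiN t - Pibar t| ≤ ε₀ / (N:ℝ) * E :=
    le_trans hstabPi (mul_le_mul_of_nonneg_right hq42 hE.le)
  have h3rd : |(PiN t - PN t) - (Pibar t - Pbar t)|
      ≤ |PiN t - Pibar t| + |PN t - Pbar t| := by
    rw [show (PiN t - PN t) - (Pibar t - Pbar t)
        = (PiN t - Pibar t) - (PN t - Pbar t) from by ring]
    exact abs_sub _ _
  have hCN : 4 * ε₀ * E / (N:ℝ) = 4 * (ε₀ / (N:ℝ) * E) := by ring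
  rw [hCN]
  linarith
end

section
/- There exists a constant C ≥ 0, independent of N, such that for every positive integer N with 1 − Γ/N ≥ 0 and (1 − Γ/N)(1 − Γ) ≥ 0, the coefficient matrices of the N-player and limiting leader Hamiltonian systems satisfy sup_{t∈[0,T]} ( ‖𝒜̌₁(t) − 𝒜₁(t)‖ + ‖ℬ̌₁(t) − ℬ₁(t)‖ + ‖ℬ̌₂(t) − ℬ₂(t)‖ + ‖𝔣̌₀(t) − 𝔣₀(t)‖ ) ≤ C/N, where ‖·‖ denotes the Frobenius norm (Euclidean norm for vectors). -/
attribute [local instance] Matrix.frobeniusNormedAddCommGroup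

open Set Real Filter Topology

/-- The coefficient matrix `𝒜₁` of the leader's Hamiltonian system, with weight
`w` (equal to `1 − Γ/N`, or `1` in the limit) and `p` the value `Π(t)` of the
corresponding scalar Riccati solution. -/
noncomputable def matA1 (A₀ B₀ A B F G L Q₀ R₀ Γ₀ Γ₁ Q R w p : ℝ) : Matrix (Fin 3) (Fin 3) ℝ :=
  !![A₀, -(B₀ * R₀⁻¹ * (G - B * R⁻¹ * L)), 0;
     Q₀ * Γ₀, -A + B * R⁻¹ * B * p, 0;
     -(p * F) + w * Q * Γ₁, p * R₀⁻¹ * (G - B * R⁻¹ * L) ^ 2, -A + B * R⁻¹ * B * p]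

/-- The coefficient matrix `ℬ₁` of the leader's Hamiltonian system. -/
noncomputable def matB1 (B₀ B L G Q₀ R₀ Γ₀ R p : ℝ) : Matrix (Fin 3) (Fin 3) ℝ :=
  !![B₀ * R₀⁻¹ * B₀, 0, -(B₀ * R₀⁻¹ * p * (G - B * R⁻¹ * L));
     0, Q₀ * Γ₀ ^ 2, 0;
     -(B₀ * R₀⁻¹ * p * (G - B * R⁻¹ * L)), 0, p ^ 2 * R₀⁻¹ * (G - B * R⁻¹ * L) ^ 2]

/-- The coefficient matrix `ℬ₂` of the leader's Hamiltonian system. -/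
noncomputable def matB2 (A₀ B₀ A B F G L Q₀ R₀ Γ₀ Γ₁ Q R w p : ℝ) : Matrix (Fin 3) (Fin 3) ℝ :=
  !![A₀, -(Q₀ * Γ₀), -(p * F) + w * Q * Γ₁;
     B₀ * R₀⁻¹ * (G - B * R⁻¹ * L), -A + B * R⁻¹ * B * p, -(p * R₀⁻¹ * (G - B * R⁻¹ * L) ^ 2);
     0, 0, -A + B * R⁻¹ * B * p]

/-- The inhomogeneous vector `𝔣₀` of the leader's Hamiltonian system, regarded
as an element of Euclidean 3-space. -/
noncomputable def vecf0 (f₀ f Q₀ Γ₀ η₀ Q η w p : ℝ) : EuclideanSpace ℝ (Fin 3) :=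
  (WithLp.equiv 2 (Fin 3 → ℝ)).symm ![f₀, -(Q₀ * Γ₀ * η₀), w * Q * η - p * f]

lemma riccati_hasDeriv {A B R q H T : ℝ} {P : ℝ → ℝ} (h : IsRiccatiSol A B R q H T P)
    {t : ℝ} (ht : t ∈ Icc 0 T) :
    HasDerivWithinAt P (-(2*A*P t) + B^2/R * P t ^ 2 - q) (Icc 0 T) t := by
  have hd := ((h.1.differentiableOn one_ne_zero) t ht).hasDerivWithinAt
  have h2 := h.2.1 t ht
  have : derivWithin P (Icc 0 T) t = -(2*A*P t) + B^2/R * P t ^ 2 - q := by linarith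
  rwa [this] at hd

lemma riccati_rev_hasDeriv {A B R q H T : ℝ} {P : ℝ → ℝ} (h : IsRiccatiSol A B R q H T P)
    {s : ℝ} (hs : s ∈ Icc 0 T) :
    HasDerivWithinAt (fun s => P (T - s))
      (2*A*(P (T - s)) - B^2/R * (P (T - s)) ^ 2 + q) (Icc 0 T) s := by
  obtain ⟨hs0, hsT⟩ := hs
  have hmem : T - s ∈ Icc 0 T := ⟨by linarith, by linarith⟩
  have hσ : HasDerivWithinAt (fun x : ℝ => T - x) (-1) (Icc 0 T) s :=
    ((hasDerivAt_id s).const_sub T).hasDerivWithinAt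
  have hmap : MapsTo (fun x : ℝ => T - x) (Icc 0 T) (Icc 0 T) := by
    intro x hx
    simp only [mem_Icc] at hx ⊢
    constructor <;> simp <;> linarith [hx.1, hx.2]
  have := (riccati_hasDeriv h hmem).comp s hσ hmap
  have e : 2*A*(P (T - s)) - B^2/R * (P (T - s)) ^ 2 + q
      = (-(2*A*P (T - s)) + B^2/R * P (T - s) ^ 2 - q) * -1 := by ring
  rw [e]
  exact this

lemma riccati_rev_hasDeriv_Ici {A B R q H T : ℝ} {P : ℝ → ℝ} (h : IsRiccatiSol A B R q H T P)
    {s a : ℝ} (ha : 0 ≤ a) (hs : s ∈ Ico a T) :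
    HasDerivWithinAt (fun s => P (T - s))
      (2*A*(P (T - s)) - B^2/R * (P (T - s)) ^ 2 + q) (Ici s) s := by
  have h1 := (riccati_rev_hasDeriv h ⟨le_trans ha hs.1, le_of_lt hs.2⟩).mono
    (Icc_subset_Icc (le_trans ha hs.1) le_rfl)
  exact h1.mono_of_mem_nhdsWithin (Icc_mem_nhdsGE_of_mem ⟨le_rfl, hs.2⟩)

lemma riccati_rev_cont {A B R q H T : ℝ} {P : ℝ → ℝ} (h : IsRiccatiSol A B R q H T P) :
    ContinuousOn (fun s => P (T - s)) (Icc 0 T) := by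
  apply h.1.continuousOn.comp (Continuous.continuousOn (by continuity))
  intro x hx
  simp only [mem_Icc] at hx ⊢
  constructor <;> simp <;> linarith [hx.1, hx.2]

lemma riccati_nonneg_s8 {A B R q H T : ℝ} {P : ℝ → ℝ} (hR : 0 < R)
    (hq : 0 ≤ q) (hH : 0 ≤ H) (h : IsRiccatiSol A B R q H T P) :
    ∀ t ∈ Icc 0 T, 0 ≤ P t := by
  set g : ℝ → ℝ := fun s => P (T - s) with hg
  suffices hsuff : ∀ s ∈ Icc 0 T, 0 ≤ g s by
    intro t ht
    have := hsuff (T - t) ⟨by linarith [ht.2], by linarith [ht.1]⟩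
    simpa [hg] using this
  by_contra hcon
  push_neg at hcon
  obtain ⟨s₀, hs₀, hneg⟩ := hcon
  have hgc : ContinuousOn g (Icc 0 T) := riccati_rev_cont h
  obtain ⟨S, hS⟩ := isCompact_Icc.exists_bound_of_continuousOn hgc
  have hc0 : (0:ℝ) ≤ B^2/R := by positivity
  set K := 2*|A| + (B^2/R)*S + 1 with hK
  set SS : Set ℝ := {x | x ∈ Icc 0 s₀ ∧ 0 ≤ g x} with hSS
  have hg0 : g 0 = H := by simp [hg, h.2.2]
  have h0mem : (0:ℝ) ∈ SS := ⟨⟨le_rfl, hs₀.1⟩, by rw [hg0]; exact hH⟩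
  have hbdd : BddAbove SS := ⟨s₀, fun x hx => hx.1.2⟩
  have hclosed : IsClosed SS := by
    have hEq : SS = Icc 0 s₀ ∩ g ⁻¹' (Ici 0) := by
      ext x; simp [hSS]
    rw [hEq]
    exact ContinuousOn.preimage_isClosed_of_isClosed
      (hgc.mono (Icc_subset_Icc le_rfl hs₀.2)) isClosed_Icc isClosed_Ici
  set s₁ := sSup SS with hs₁def
  have hs₁mem : s₁ ∈ SS := hclosed.csSup_mem ⟨0, h0mem⟩ hbdd
  have hs₁s₀ : s₁ ≤ s₀ := hs₁mem.1.2
  have hs₁0 : 0 ≤ s₁ := hs₁mem.1.1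
  have hgs₁ : 0 ≤ g s₁ := hs₁mem.2
  have hs₁lt : s₁ < s₀ := lt_of_le_of_ne hs₁s₀ (by intro hE; rw [hE] at hgs₁; linarith)
  have hright : ∀ x ∈ Ioc s₁ s₀, g x < 0 := by
    intro x hx
    by_contra hge
    push_neg at hge
    have hmem : x ∈ SS := ⟨⟨le_trans hs₁0 (le_of_lt hx.1), hx.2⟩, hge⟩
    exact absurd (le_csSup hbdd hmem) (not_le.2 hx.1)
  have hgs₁0 : g s₁ = 0 := by
    rcases eq_or_lt_of_le hgs₁ with hE | hlt
    · exact hE.symm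
    · exfalso
      have hcw : ContinuousWithinAt g (Icc 0 T) s₁ :=
        hgc s₁ ⟨hs₁0, le_trans hs₁s₀ hs₀.2⟩
      have hsub : Ioc s₁ s₀ ⊆ Icc 0 T := fun x hx =>
        ⟨le_trans hs₁0 (le_of_lt hx.1), le_trans hx.2 hs₀.2⟩
      have hmem1 : g ⁻¹' (Ioi 0) ∈ 𝓝[Icc 0 T] s₁ := hcw (Ioi_mem_nhds hlt)
      have hmem2 : g ⁻¹' (Ioi 0) ∈ 𝓝[Ioc s₁ s₀] s₁ := nhdsWithin_mono s₁ hsub hmem1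
      have hne : (𝓝[Ioc s₁ s₀] s₁).NeBot := by
        rw [← mem_closure_iff_nhdsWithin_neBot, closure_Ioc hs₁lt.ne]
        exact ⟨le_rfl, hs₁lt.le⟩
      obtain ⟨x, hx1, hx2⟩ := Filter.nonempty_of_mem (Filter.inter_mem hmem2 self_mem_nhdsWithin)
      exact absurd (hright x hx2) (not_lt.2 (le_of_lt hx1))
  -- Grönwall on [s₁, s₀] applied to -g
  have key := le_gronwallBound_of_liminf_deriv_right_le
    (f := fun s => -g s)
    (f' := fun s => -(2*A*(g s) - B^2/R * (g s) ^ 2 + q)) (δ := 0) (K := K) (ε := 0)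
    (a := s₁) (b := s₀)
    ((hgc.mono (Icc_subset_Icc hs₁0 hs₀.2)).neg)
    (fun x hx r hr => by
      have hder : HasDerivWithinAt g (2*A*(g x) - B^2/R * (g x) ^ 2 + q) (Ici x) x :=
        riccati_rev_hasDeriv_Ici h hs₁0 ⟨hx.1, lt_of_lt_of_le hx.2 hs₀.2⟩
      exact hder.neg.liminf_right_slope_le hr)
    (by show -g s₁ ≤ (0:ℝ); rw [hgs₁0]; norm_num)
    (by
      intro x hx
      show -(2*A*(g x) - B^2/R * (g x) ^ 2 + q) ≤ K * (-g x) + 0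
      have hfx : 0 ≤ -g x := by
        rcases eq_or_lt_of_le hx.1 with hE | hlt
        · rw [← hE, hgs₁0]; norm_num
        · have := hright x ⟨hlt, le_of_lt hx.2⟩; linarith
      have hxT : x ∈ Icc 0 T := ⟨le_trans hs₁0 hx.1, le_trans (le_of_lt hx.2) hs₀.2⟩
      have hSx : -g x ≤ S := by
        have := hS x hxT; rw [Real.norm_eq_abs] at this
        linarith [neg_abs_le (g x)]
      have hA1 : 2 * A * (-g x) ≤ 2 * |A| * (-g x) :=
        mul_le_mul_of_nonneg_right (by nlinarith [le_abs_self A]) hfx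
      have hA2 : (B^2/R) * ((-g x) * (-g x)) ≤ (B^2/R) * (S * (-g x)) :=
        mul_le_mul_of_nonneg_left (mul_le_mul_of_nonneg_right hSx hfx) hc0
      simp only [hK]
      nlinarith
      )
  have hfin := key s₀ ⟨hs₁s₀, le_rfl⟩
  rw [gronwallBound_ε0_δ0] at hfin
  linarith

lemma gronwallBound_le_of_le {δ K ε x T : ℝ} (hδ : 0 ≤ δ) (hK : 1 ≤ K) (hε : 0 ≤ ε)
    (hx : 0 ≤ x) (hxT : x ≤ T) : gronwallBound δ K ε x ≤ (δ + ε) * exp (K * T) := by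
  rw [gronwallBound_of_K_ne_0 (by linarith)]
  have hK0 : (0:ℝ) < K := by linarith
  have h1 : exp (K * x) ≤ exp (K * T) := exp_le_exp.2 (by nlinarith)
  have h2 : ε / K ≤ ε := div_le_self hε hK
  have h5 : (1:ℝ) ≤ exp (K * x) := one_le_exp (by positivity)
  have h6 : 0 ≤ ε / K := div_nonneg hε (le_of_lt hK0)
  have h7 : ε / K * (exp (K * x) - 1) ≤ ε * (exp (K * x) - 1) :=
    mul_le_mul_of_nonneg_right h2 (by linarith)
  have h8 : δ * exp (K * x) ≤ δ * exp (K * T) := mul_le_mul_of_nonneg_left h1 hδ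
  nlinarith [exp_pos (K * T)]

lemma riccati_abs_le {A B R q H T : ℝ} {P : ℝ → ℝ} (hR : 0 < R)
    (hq : 0 ≤ q) (hH : 0 ≤ H) (h : IsRiccatiSol A B R q H T P) :
    ∀ t ∈ Icc 0 T, |P t| ≤ (H + q) * exp ((2 * |A| + 1) * T) := by
  have hnn := riccati_nonneg_s8 hR hq hH h
  set g : ℝ → ℝ := fun s => P (T - s) with hg
  have hgc : ContinuousOn g (Icc 0 T) := riccati_rev_cont h
  have hc0 : (0:ℝ) ≤ B^2/R := by positivity
  set K := 2 * |A| + 1 with hK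
  have key := le_gronwallBound_of_liminf_deriv_right_le
    (f := g) (f' := fun s => 2*A*(g s) - B^2/R * (g s) ^ 2 + q)
    (δ := H) (K := K) (ε := q) (a := 0) (b := T) hgc
    (fun x hx r hr =>
      (riccati_rev_hasDeriv_Ici h le_rfl hx).liminf_right_slope_le hr)
    (by show P (T - 0) ≤ H; rw [sub_zero, h.2.2])
    (by
      intro x hx
      show 2*A*(g x) - B^2/R * (g x) ^ 2 + q ≤ K * g x + q
      have hgx : 0 ≤ g x := hnn (T - x) ⟨by linarith [hx.2.le], by linarith [hx.1]⟩
      have hA1 : 2 * A * g x ≤ 2 * |A| * g x :=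
        mul_le_mul_of_nonneg_right (by nlinarith [le_abs_self A]) hgx
      nlinarith [sq_nonneg (g x)])
  intro t ht
  have hs : T - t ∈ Icc 0 T := ⟨by linarith [ht.2], by linarith [ht.1]⟩
  have h1 := key (T - t) hs
  have h2 : g (T - t) = P t := by simp [hg]
  have h3 : gronwallBound H K q (T - t - 0) ≤ (H + q) * exp (K * T) :=
    gronwallBound_le_of_le hH (by rw [hK]; nlinarith [abs_nonneg A]) hq (by linarith [hs.1]) (by linarith [hs.2])
  rw [h2] at h1
  rw [abs_of_nonneg (hnn t ht)]
  exact le_trans h1 h3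

lemma riccati_diff {A B R q₁ q₂ H T M : ℝ} {P₁ P₂ : ℝ → ℝ} (hR : 0 < R) (hT : 0 ≤ T)
    (h₁ : IsRiccatiSol A B R q₁ H T P₁) (h₂ : IsRiccatiSol A B R q₂ H T P₂)
    (hb₁ : ∀ t ∈ Icc 0 T, |P₁ t| ≤ M) (hb₂ : ∀ t ∈ Icc 0 T, |P₂ t| ≤ M) :
    ∀ t ∈ Icc 0 T, |P₁ t - P₂ t| ≤
      |q₁ - q₂| * exp ((2 * |A| + 2 * (B^2/R) * M + 1) * T) := by
  have hc0 : (0:ℝ) ≤ B^2/R := by positivity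
  set K := 2 * |A| + 2 * (B^2/R) * M + 1 with hK
  set e : ℝ → ℝ := fun s => P₁ (T - s) - P₂ (T - s) with he
  have hM0 : 0 ≤ M := le_trans (abs_nonneg _) (hb₁ T ⟨hT, le_rfl⟩)
  have hK1 : (1:ℝ) ≤ K := by rw [hK]; nlinarith [abs_nonneg A]
  have hecont : ContinuousOn e (Icc 0 T) :=
    (riccati_rev_cont h₁).sub (riccati_rev_cont h₂)
  have key := norm_le_gronwallBound_of_norm_deriv_right_le (E := ℝ)
    (f := e)
    (f' := fun s => (2*A*(P₁ (T - s)) - B^2/R * (P₁ (T - s)) ^ 2 + q₁)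
                  - (2*A*(P₂ (T - s)) - B^2/R * (P₂ (T - s)) ^ 2 + q₂))
    (δ := 0) (K := K) (ε := |q₁ - q₂|) (a := 0) (b := T) hecont
    (fun x hx => (riccati_rev_hasDeriv_Ici h₁ le_rfl hx).sub
      (riccati_rev_hasDeriv_Ici h₂ le_rfl hx))
    (by
      show ‖P₁ (T - 0) - P₂ (T - 0)‖ ≤ 0
      rw [sub_zero, h₁.2.2, h₂.2.2, sub_self, norm_zero])
    (by
      intro x hx
      have hxm : T - x ∈ Icc 0 T := ⟨by linarith [hx.2.le], by linarith [hx.1]⟩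
      set u := P₁ (T - x) with hu
      set v := P₂ (T - x) with hv
      have hbu := hb₁ (T - x) hxm
      have hbv := hb₂ (T - x) hxm
      show ‖(2*A*u - B^2/R * u ^ 2 + q₁) - (2*A*v - B^2/R * v ^ 2 + q₂)‖
        ≤ K * ‖u - v‖ + |q₁ - q₂|
      have hre : (2*A*u - B^2/R * u ^ 2 + q₁) - (2*A*v - B^2/R * v ^ 2 + q₂)
          = (2*A - B^2/R * (u + v)) * (u - v) + (q₁ - q₂) := by ring
      rw [Real.norm_eq_abs, Real.norm_eq_abs, hre]
      have hcoef : |2*A - B^2/R * (u + v)| ≤ K := by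
        have h1 : |2*A - B^2/R * (u + v)| ≤ |2*A| + |B^2/R * (u + v)| := abs_sub _ _
        have h2 : |B^2/R * (u + v)| = B^2/R * |u + v| := by
          rw [abs_mul, abs_of_nonneg hc0]
        have h3 : |u + v| ≤ 2 * M := le_trans (abs_add_le u v) (by linarith)
        have h4 : B^2/R * |u + v| ≤ B^2/R * (2 * M) :=
          mul_le_mul_of_nonneg_left h3 hc0
        have h5 : |(2:ℝ)*A| = 2 * |A| := by rw [abs_mul]; norm_num
        rw [hK]; rw [h5] at h1; rw [h2] at h1; nlinarith
      calc |(2*A - B^2/R * (u + v)) * (u - v) + (q₁ - q₂)|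
          ≤ |(2*A - B^2/R * (u + v)) * (u - v)| + |q₁ - q₂| := abs_add_le _ _
        _ = |2*A - B^2/R * (u + v)| * |u - v| + |q₁ - q₂| := by rw [abs_mul]
        _ ≤ K * |u - v| + |q₁ - q₂| :=
            add_le_add_left (mul_le_mul_of_nonneg_right hcoef (abs_nonneg _)) _)
  intro t ht
  have hs : T - t ∈ Icc 0 T := ⟨by linarith [ht.2], by linarith [ht.1]⟩
  have h1 := key (T - t) hs
  have h2 : e (T - t) = P₁ t - P₂ t := by simp [he]
  rw [h2, Real.norm_eq_abs] at h1
  refine le_trans h1 ?_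
  have h3 : gronwallBound 0 K |q₁ - q₂| (T - t - 0) ≤ (0 + |q₁ - q₂|) * exp (K * T) :=
    gronwallBound_le_of_le le_rfl hK1 (abs_nonneg _) (by linarith [hs.1]) (by linarith [hs.2])
  rw [zero_add] at h3
  exact h3


lemma sum_sq_le_sq_sum {ι : Type*} (s : Finset ι) (f : ι → ℝ) (hf : ∀ i ∈ s, 0 ≤ f i) :
    ∑ i ∈ s, f i ^ 2 ≤ (∑ i ∈ s, f i) ^ 2 := by
  calc ∑ i ∈ s, f i ^ 2
      ≤ ∑ i ∈ s, f i * ∑ j ∈ s, f j :=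
        Finset.sum_le_sum (fun i hi => by
          rw [sq]
          exact mul_le_mul_of_nonneg_left (Finset.single_le_sum hf hi) (hf i hi))
    _ = (∑ i ∈ s, f i) ^ 2 := by rw [← Finset.sum_mul, sq]

lemma frob_le_sum_abs (M : Matrix (Fin 3) (Fin 3) ℝ) : ‖M‖ ≤ ∑ i, ∑ j, |M i j| := by
  rw [Matrix.frobenius_norm_def]
  have h1 : ∀ (i j : Fin 3), ‖M i j‖ ^ (2:ℝ) = |M i j| ^ 2 := fun i j => by
    rw [Real.norm_eq_abs, ← Real.rpow_natCast |M i j| 2]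
    norm_num
  have hnn : (0:ℝ) ≤ ∑ i, ∑ j, |M i j| :=
    Finset.sum_nonneg fun i _ => Finset.sum_nonneg fun j _ => abs_nonneg _
  have h2 : ∑ i, ∑ j, ‖M i j‖ ^ (2:ℝ) ≤ (∑ i, ∑ j, |M i j|) ^ 2 := by
    simp_rw [h1]
    calc ∑ i, ∑ j, |M i j| ^ 2
        ≤ ∑ i, (∑ j, |M i j|) ^ 2 :=
          Finset.sum_le_sum fun i _ => sum_sq_le_sq_sum _ _ (fun j _ => abs_nonneg _)
      _ ≤ (∑ i, ∑ j, |M i j|) ^ 2 :=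
          sum_sq_le_sq_sum _ _ (fun i _ => Finset.sum_nonneg fun j _ => abs_nonneg _)
  calc (∑ i, ∑ j, ‖M i j‖ ^ (2:ℝ)) ^ (1/2:ℝ)
      ≤ ((∑ i, ∑ j, |M i j|) ^ 2) ^ (1/2:ℝ) := by
        apply Real.rpow_le_rpow ?_ h2 (by norm_num)
        exact Finset.sum_nonneg fun i _ => Finset.sum_nonneg fun j _ =>
          Real.rpow_natCast (‖M i j‖) 2 ▸ by positivity
    _ = ∑ i, ∑ j, |M i j| := by
        rw [← Real.rpow_natCast _ 2, ← Real.rpow_mul hnn]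
        norm_num

lemma euc_le_sum_abs (x : EuclideanSpace ℝ (Fin 3)) : ‖x‖ ≤ ∑ i, |x i| := by
  rw [EuclideanSpace.norm_eq]
  have hnn : (0:ℝ) ≤ ∑ i, |x i| := Finset.sum_nonneg fun i _ => abs_nonneg _
  have h2 : ∑ i, ‖x i‖ ^ 2 ≤ (∑ i, |x i|) ^ 2 := by
    simp_rw [Real.norm_eq_abs]
    exact sum_sq_le_sq_sum _ _ (fun i _ => abs_nonneg _)
  calc √(∑ i, ‖x i‖ ^ 2) ≤ √((∑ i, |x i|) ^ 2) := Real.sqrt_le_sqrt h2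
    _ = ∑ i, |x i| := Real.sqrt_sq hnn

lemma abs_lin_le {a b dp dw : ℝ} : |(-(dp * a) + dw * b)| ≤ |a| * |dp| + |b| * |dw| := by
  calc |(-(dp * a) + dw * b)| ≤ |(-(dp * a))| + |dw * b| := abs_add_le _ _
    _ = |a| * |dp| + |b| * |dw| := by rw [abs_neg, abs_mul, abs_mul]; ring

lemma matA1_diff_le (A₀ B₀ A B F G L Q₀ R₀ Γ₀ Γ₁ Q R w p w' p' : ℝ) :
    ‖matA1 A₀ B₀ A B F G L Q₀ R₀ Γ₀ Γ₁ Q R w p - matA1 A₀ B₀ A B F G L Q₀ R₀ Γ₀ Γ₁ Q R w' p'‖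
      ≤ (2 * |B * R⁻¹ * B| + |F| + |R₀⁻¹ * (G - B * R⁻¹ * L) ^ 2|) * |p - p'|
        + |Q * Γ₁| * |w - w'| := by
  have hD : matA1 A₀ B₀ A B F G L Q₀ R₀ Γ₀ Γ₁ Q R w p - matA1 A₀ B₀ A B F G L Q₀ R₀ Γ₀ Γ₁ Q R w' p'
      = !![0, 0, 0;
           0, B * R⁻¹ * B * (p - p'), 0;
           -((p - p') * F) + (w - w') * (Q * Γ₁),
             R₀⁻¹ * (G - B * R⁻¹ * L) ^ 2 * (p - p'), B * R⁻¹ * B * (p - p')] := by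
    ext i j
    fin_cases i <;> fin_cases j <;> simp [matA1] <;> ring
  rw [hD]
  refine (frob_le_sum_abs _).trans ?_
  simp [Fin.sum_univ_three]
  have e1 : |B * R⁻¹ * B * (p - p')| = |B * R⁻¹ * B| * |p - p'| := abs_mul _ _
  have e2 : |R₀⁻¹ * (G - B * R⁻¹ * L) ^ 2 * (p - p')|
      = |R₀⁻¹ * (G - B * R⁻¹ * L) ^ 2| * |p - p'| := abs_mul _ _
  have e3 : |(-((p - p') * F) + (w - w') * (Q * Γ₁))|
      ≤ |F| * |p - p'| + |Q * Γ₁| * |w - w'| := abs_lin_le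
  simp only [abs_mul, abs_inv, abs_pow, sq_abs] at e1 e2 e3 ⊢
  linarith [e1, e2, e3]

lemma matB1_diff_le (B₀ B L G Q₀ R₀ Γ₀ R p p' : ℝ) :
    ‖matB1 B₀ B L G Q₀ R₀ Γ₀ R p - matB1 B₀ B L G Q₀ R₀ Γ₀ R p'‖
      ≤ (2 * |B₀ * R₀⁻¹ * (G - B * R⁻¹ * L)|
          + |R₀⁻¹ * (G - B * R⁻¹ * L) ^ 2| * (|p| + |p'|)) * |p - p'| := by
  have hD : matB1 B₀ B L G Q₀ R₀ Γ₀ R p - matB1 B₀ B L G Q₀ R₀ Γ₀ R p'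
      = !![0, 0, -(B₀ * R₀⁻¹ * (G - B * R⁻¹ * L) * (p - p'));
           0, 0, 0;
           -(B₀ * R₀⁻¹ * (G - B * R⁻¹ * L) * (p - p')), 0,
             R₀⁻¹ * (G - B * R⁻¹ * L) ^ 2 * ((p + p') * (p - p'))] := by
    ext i j
    fin_cases i <;> fin_cases j <;> simp [matB1, Matrix.vecHead, Matrix.vecTail] <;> ring
  rw [hD]
  refine (frob_le_sum_abs _).trans ?_
  simp [Fin.sum_univ_three]
  have e1 : |B₀ * R₀⁻¹ * (G - B * R⁻¹ * L) * (p - p')|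
      = |B₀ * R₀⁻¹ * (G - B * R⁻¹ * L)| * |p - p'| := abs_mul _ _
  have e2 : |R₀⁻¹ * (G - B * R⁻¹ * L) ^ 2 * ((p + p') * (p - p'))|
      ≤ |R₀⁻¹ * (G - B * R⁻¹ * L) ^ 2| * ((|p| + |p'|) * |p - p'|) := by
    rw [abs_mul (R₀⁻¹ * (G - B * R⁻¹ * L) ^ 2) ((p + p') * (p - p')), abs_mul (p + p') (p - p')]
    exact mul_le_mul_of_nonneg_left
      (mul_le_mul_of_nonneg_right (abs_add_le _ _) (abs_nonneg _)) (abs_nonneg _)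
  have e3 : |R₀⁻¹ * (G - B * R⁻¹ * L) ^ 2| * ((|p| + |p'|) * |p - p'|)
      = |R₀⁻¹ * (G - B * R⁻¹ * L) ^ 2| * (|p| + |p'|) * |p - p'| := by ring
  simp only [abs_mul, abs_inv, abs_pow, sq_abs] at e1 e2 e3 ⊢
  linarith [e1, e2, e3]

lemma matB2_diff_le (A₀ B₀ A B F G L Q₀ R₀ Γ₀ Γ₁ Q R w p w' p' : ℝ) :
    ‖matB2 A₀ B₀ A B F G L Q₀ R₀ Γ₀ Γ₁ Q R w p - matB2 A₀ B₀ A B F G L Q₀ R₀ Γ₀ Γ₁ Q R w' p'‖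
      ≤ (2 * |B * R⁻¹ * B| + |F| + |R₀⁻¹ * (G - B * R⁻¹ * L) ^ 2|) * |p - p'|
        + |Q * Γ₁| * |w - w'| := by
  have hD : matB2 A₀ B₀ A B F G L Q₀ R₀ Γ₀ Γ₁ Q R w p - matB2 A₀ B₀ A B F G L Q₀ R₀ Γ₀ Γ₁ Q R w' p'
      = !![0, 0, -((p - p') * F) + (w - w') * (Q * Γ₁);
           0, B * R⁻¹ * B * (p - p'), -(R₀⁻¹ * (G - B * R⁻¹ * L) ^ 2 * (p - p'));
           0, 0, B * R⁻¹ * B * (p - p')] := by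
    ext i j
    fin_cases i <;> fin_cases j <;> simp [matB2, Matrix.vecHead, Matrix.vecTail] <;> ring
  rw [hD]
  refine (frob_le_sum_abs _).trans ?_
  simp [Fin.sum_univ_three]
  have e1 : |B * R⁻¹ * B * (p - p')| = |B * R⁻¹ * B| * |p - p'| := abs_mul _ _
  have e2 : |R₀⁻¹ * (G - B * R⁻¹ * L) ^ 2 * (p - p')|
      = |R₀⁻¹ * (G - B * R⁻¹ * L) ^ 2| * |p - p'| := abs_mul _ _
  have e3 : |(-((p - p') * F) + (w - w') * (Q * Γ₁))|
      ≤ |F| * |p - p'| + |Q * Γ₁| * |w - w'| := abs_lin_le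
  simp only [abs_mul, abs_inv, abs_pow, sq_abs] at e1 e2 e3 ⊢
  linarith [e1, e2, e3]

lemma vecf0_diff_le (f₀ f Q₀ Γ₀ η₀ Q η w p w' p' : ℝ) :
    ‖vecf0 f₀ f Q₀ Γ₀ η₀ Q η w p - vecf0 f₀ f Q₀ Γ₀ η₀ Q η w' p'‖
      ≤ |f| * |p - p'| + |Q * η| * |w - w'| := by
  have hD : vecf0 f₀ f Q₀ Γ₀ η₀ Q η w p - vecf0 f₀ f Q₀ Γ₀ η₀ Q η w' p'
      = (WithLp.equiv 2 (Fin 3 → ℝ)).symm ![0, 0, -((p - p') * f) + (w - w') * (Q * η)] := by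
    ext i
    fin_cases i <;> simp [vecf0] <;> ring
  rw [hD]
  refine (euc_le_sum_abs _).trans ?_
  simp [Fin.sum_univ_three]
  have e3 : |(-((p - p') * f) + (w - w') * (Q * η))|
      ≤ |f| * |p - p'| + |Q * η| * |w - w'| := abs_lin_le
  simp only [abs_mul] at e3 ⊢
  linarith [e3]

/-- There is a constant `C ≥ 0`, independent of `N`, such that for every `N` with
`1 − Γ/N ≥ 0` and `(1 − Γ/N)(1 − Γ) ≥ 0`, the coefficient matrices of the
`N`-player and limiting leader Hamiltonian systems satisfy
`sup_{t∈[0,T]} (‖𝒜̌₁ − 𝒜₁‖ + ‖ℬ̌₁ − ℬ₁‖ + ‖ℬ̌₂ − ℬ₂‖ + ‖𝔣̌₀ − 𝔣₀‖) ≤ C/N`,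
with the Frobenius norm on matrices and the Euclidean norm on vectors. -/
theorem leader_coefficients_meanfield_convergence
    (T A₀ B₀ C₀ f₀ A B F G f L Q₀ R₀ Γ₀ Γ₁ η₀ Q R H Γ η : ℝ)
    (hT : 0 < T) (hR : 0 < R) (hR₀ : 0 < R₀) (hQ : 0 ≤ Q) (hQ₀ : 0 ≤ Q₀)
    (hH : 0 ≤ H) (hΓQ : 0 ≤ (1 - Γ) * Q)
    (Pibar : ℝ → ℝ) (hPibar : IsRiccatiSol A B R ((1 - Γ) * Q) H T Pibar) :
    ∃ C : ℝ, 0 ≤ C ∧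
      ∀ N : ℕ, 0 < N → 0 ≤ 1 - Γ / (N : ℝ) → 0 ≤ (1 - Γ / (N : ℝ)) * (1 - Γ) →
        ∀ PiN : ℝ → ℝ,
          IsRiccatiSol A B R ((1 - Γ / (N : ℝ)) * (1 - Γ) * Q) H T PiN →
          ∀ t ∈ Set.Icc 0 T,
            ‖matA1 A₀ B₀ A B F G L Q₀ R₀ Γ₀ Γ₁ Q R (1 - Γ / (N : ℝ)) (PiN t)
                - matA1 A₀ B₀ A B F G L Q₀ R₀ Γ₀ Γ₁ Q R 1 (Pibar t)‖
              + ‖matB1 B₀ B L G Q₀ R₀ Γ₀ R (PiN t) - matB1 B₀ B L G Q₀ R₀ Γ₀ R (Pibar t)‖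
              + ‖matB2 A₀ B₀ A B F G L Q₀ R₀ Γ₀ Γ₁ Q R (1 - Γ / (N : ℝ)) (PiN t)
                - matB2 A₀ B₀ A B F G L Q₀ R₀ Γ₀ Γ₁ Q R 1 (Pibar t)‖
              + ‖vecf0 f₀ f Q₀ Γ₀ η₀ Q η (1 - Γ / (N : ℝ)) (PiN t)
                - vecf0 f₀ f Q₀ Γ₀ η₀ Q η 1 (Pibar t)‖
            ≤ C / (N : ℝ) := by
  have hc0 : (0:ℝ) ≤ B ^ 2 / R := by positivity
  obtain ⟨qmax, hqmax⟩ : ∃ x : ℝ, x = (1 + |Γ|) * ((1 - Γ) * Q) := ⟨_, rfl⟩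
  have hqmax0 : 0 ≤ qmax := hqmax ▸ mul_nonneg (by positivity) hΓQ
  obtain ⟨Mb, hMb⟩ : ∃ x : ℝ, x = (H + qmax) * exp ((2 * |A| + 1) * T) := ⟨_, rfl⟩
  have hMb0 : 0 ≤ Mb := hMb ▸ mul_nonneg (by linarith) (exp_pos _).le
  obtain ⟨K, hK⟩ : ∃ x : ℝ, x = 2 * |A| + 2 * (B ^ 2 / R) * Mb + 1 := ⟨_, rfl⟩
  obtain ⟨CP, hCP⟩ : ∃ x : ℝ, x = exp (K * T) := ⟨_, rfl⟩
  have hCP0 : 0 ≤ CP := hCP ▸ (exp_pos _).le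
  obtain ⟨Cd, hCd⟩ : ∃ x : ℝ, x = |Γ| * ((1 - Γ) * Q) * CP := ⟨_, rfl⟩
  have hCd0 : 0 ≤ Cd := hCd ▸ mul_nonneg (mul_nonneg (abs_nonneg _) hΓQ) hCP0
  obtain ⟨kA, hkA⟩ : ∃ x : ℝ, x = 2 * |B * R⁻¹ * B| + |F| + |R₀⁻¹ * (G - B * R⁻¹ * L) ^ 2| := ⟨_, rfl⟩
  have hkA0 : 0 ≤ kA := by rw [hkA]; positivity
  obtain ⟨kB, hkB⟩ : ∃ x : ℝ, x = 2 * |B₀ * R₀⁻¹ * (G - B * R⁻¹ * L)|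
      + |R₀⁻¹ * (G - B * R⁻¹ * L) ^ 2| * (2 * Mb) := ⟨_, rfl⟩
  have hkB0 : 0 ≤ kB := by rw [hkB]; have := abs_nonneg (R₀⁻¹ * (G - B * R⁻¹ * L) ^ 2); have := abs_nonneg (B₀ * R₀⁻¹ * (G - B * R⁻¹ * L)); nlinarith
  refine ⟨(2 * kA + kB + |f|) * Cd + (2 * |Q * Γ₁| + |Q * η|) * |Γ|, ?_, ?_⟩
  · have h1 : 0 ≤ 2 * kA + kB + |f| := by positivity
    have h2 : 0 ≤ 2 * |Q * Γ₁| + |Q * η| := by positivity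
    have := mul_nonneg h1 hCd0
    have := mul_nonneg h2 (abs_nonneg Γ)
    linarith
  · intro N hN hw hwq PiN hPiN t ht
    have hN1 : (1:ℝ) ≤ (N:ℝ) := by exact_mod_cast hN
    have hNpos : (0:ℝ) < (N:ℝ) := by linarith
    have hqN : 0 ≤ (1 - Γ / (N:ℝ)) * (1 - Γ) * Q := by
      rw [mul_assoc]; exact mul_nonneg hw hΓQ
    have hqNle : (1 - Γ / (N:ℝ)) * (1 - Γ) * Q ≤ qmax := by
      rw [hqmax, mul_assoc]
      refine mul_le_mul_of_nonneg_right ?_ hΓQ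
      have h1 : |Γ| / (N:ℝ) ≤ |Γ| := div_le_self (abs_nonneg _) hN1
      have h2 : -(Γ / (N:ℝ)) ≤ |Γ| / (N:ℝ) := by
        have h3 : |Γ / (N:ℝ)| = |Γ| / (N:ℝ) := by rw [abs_div, abs_of_pos hNpos]
        linarith [neg_le_abs (Γ / (N:ℝ))]
      linarith
    have hbarle : (1 - Γ) * Q ≤ qmax := by
      rw [hqmax]
      nlinarith [abs_nonneg Γ]
    have hbN : ∀ s ∈ Set.Icc 0 T, |PiN s| ≤ Mb := by
      intro s hs
      refine le_trans (riccati_abs_le hR hqN hH hPiN s hs) ?_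
      rw [hMb]
      exact mul_le_mul_of_nonneg_right (by linarith) (exp_pos _).le
    have hbbar : ∀ s ∈ Set.Icc 0 T, |Pibar s| ≤ Mb := by
      intro s hs
      refine le_trans (riccati_abs_le hR hΓQ hH hPibar s hs) ?_
      rw [hMb]
      exact mul_le_mul_of_nonneg_right (by linarith) (exp_pos _).le
    have hdiff := riccati_diff hR hT.le hPiN hPibar hbN hbbar t ht
    have habsq : |(1 - Γ / (N:ℝ)) * (1 - Γ) * Q - (1 - Γ) * Q| = |Γ| / (N:ℝ) * ((1 - Γ) * Q) := by
      rw [show (1 - Γ / (N:ℝ)) * (1 - Γ) * Q - (1 - Γ) * Q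
          = -(Γ / (N:ℝ)) * ((1 - Γ) * Q) from by ring, abs_mul, abs_neg, abs_div,
        abs_of_pos hNpos, abs_of_nonneg hΓQ]
    have hd : |PiN t - Pibar t| ≤ Cd / (N:ℝ) := by
      rw [habsq] at hdiff
      have hCdN : Cd / (N:ℝ) = |Γ| / (N:ℝ) * ((1 - Γ) * Q)
          * exp ((2 * |A| + 2 * (B ^ 2 / R) * Mb + 1) * T) := by
        rw [hCd, hCP, hK]; ring
      rw [hCdN]
      exact hdiff
    have hw1 : |(1 - Γ / (N:ℝ)) - 1| = |Γ| / (N:ℝ) := by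
      rw [show (1 - Γ / (N:ℝ)) - 1 = -(Γ / (N:ℝ)) from by ring, abs_neg, abs_div,
        abs_of_pos hNpos]
    have hA := matA1_diff_le A₀ B₀ A B F G L Q₀ R₀ Γ₀ Γ₁ Q R (1 - Γ / (N:ℝ)) (PiN t) 1 (Pibar t)
    have hB1 := matB1_diff_le B₀ B L G Q₀ R₀ Γ₀ R (PiN t) (Pibar t)
    have hB2 := matB2_diff_le A₀ B₀ A B F G L Q₀ R₀ Γ₀ Γ₁ Q R (1 - Γ / (N:ℝ)) (PiN t) 1 (Pibar t)
    have hf0 := vecf0_diff_le f₀ f Q₀ Γ₀ η₀ Q η (1 - Γ / (N:ℝ)) (PiN t) 1 (Pibar t)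
    rw [hw1] at hA hB2 hf0
    -- upgrade B1 bound
    have hB1' : ‖matB1 B₀ B L G Q₀ R₀ Γ₀ R (PiN t) - matB1 B₀ B L G Q₀ R₀ Γ₀ R (Pibar t)‖
        ≤ kB * |PiN t - Pibar t| := by
      refine le_trans hB1 ?_
      refine mul_le_mul_of_nonneg_right ?_ (abs_nonneg _)
      rw [hkB]
      have h1 : |PiN t| + |Pibar t| ≤ 2 * Mb := by
        linarith [hbN t ht, hbbar t ht]
      have h2 := mul_le_mul_of_nonneg_left h1 (abs_nonneg (R₀⁻¹ * (G - B * R⁻¹ * L) ^ 2))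
      linarith
    -- combine
    have hdge : 0 ≤ |PiN t - Pibar t| := abs_nonneg _
    have hG : 0 ≤ |Γ| / (N:ℝ) := by positivity
    have hm1 : kA * |PiN t - Pibar t| ≤ kA * (Cd / (N:ℝ)) := mul_le_mul_of_nonneg_left hd hkA0
    have hm2 : kB * |PiN t - Pibar t| ≤ kB * (Cd / (N:ℝ)) := mul_le_mul_of_nonneg_left hd hkB0
    have hm3 : |f| * |PiN t - Pibar t| ≤ |f| * (Cd / (N:ℝ)) :=
      mul_le_mul_of_nonneg_left hd (abs_nonneg _)
    have hCN : ((2 * kA + kB + |f|) * Cd + (2 * |Q * Γ₁| + |Q * η|) * |Γ|) / (N:ℝ)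
        = (2 * kA + kB + |f|) * (Cd / (N:ℝ)) + (2 * |Q * Γ₁| + |Q * η|) * (|Γ| / (N:ℝ)) := by
      field_simp
    rw [hCN]
    rw [← hkA] at hA hB2
    have hexp1 : (2 * kA + kB + |f|) * (Cd / (N:ℝ))
        = kA * (Cd / (N:ℝ)) + kA * (Cd / (N:ℝ)) + kB * (Cd / (N:ℝ)) + |f| * (Cd / (N:ℝ)) := by
      ring
    have hexp2 : (2 * |Q * Γ₁| + |Q * η|) * (|Γ| / (N:ℝ))
        = |Q * Γ₁| * (|Γ| / (N:ℝ)) + |Q * Γ₁| * (|Γ| / (N:ℝ)) + |Q * η| * (|Γ| / (N:ℝ)) := by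
      ring
    linarith [hA, hB1', hB2, hf0, hm1, hm2, hm3]
end
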